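/- Consider the dual-rail min CRN with reactions (1) X₁⁻ → X₂⁺ + Y⁻, (2) X₂⁻ → X₁⁺ + Y⁻, (3) X₁⁺ + X₂⁺ → Y⁺. From an initial state with concentrations x₁⁺, x₁⁻, x₂⁺, x₂⁻ and zero Y⁺, Y⁻, there is a line-segment reachable static state with y⁺ − y⁻ = min(x₁⁺ − x₁⁻, x₂⁺ − x₂⁻). -/

import Mathlib

/-- A chemical reaction network: reactant and product stoichiometries per reaction. -/
structure CRN (S R : Type) where
  reactants : R → S → ℕ
  products : R → S → ℕ

namespace CRN

variable {S R : Type} [Fintype S] [Fintype R]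

/-- Net change of species `s` by one unit of reaction `r`. -/
def net (C : CRN S R) (r : R) (s : S) : ℝ :=
  (C.products r s : ℝ) - (C.reactants r s : ℝ)

/-- A flux vector `u` is applicable at state `a` if it is nonnegative and every
reaction with positive flux has all its reactants positive in `a`. -/
def Applicable (C : CRN S R) (u : R → ℝ) (a : S → ℝ) : Prop :=
  (∀ r, 0 ≤ u r) ∧ ∀ r, 0 < u r → ∀ s, 0 < C.reactants r s → 0 < a s

/-- Straight-line reachability via a given flux vector: `b = M u + a`,
with `u` applicable at `a` and `b` a valid (nonnegative) state. -/
def StepWith (C : CRN S R) (u : R → ℝ) (a b : S → ℝ) : Prop :=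
  C.Applicable u a ∧ (∀ s, 0 ≤ b s) ∧ ∀ s, b s = a s + ∑ r, u r * C.net r s

/-- Straight-line reachability. -/
def Step (C : CRN S R) (a b : S → ℝ) : Prop := ∃ u, C.StepWith u a b

/-- Line-segment reachability: reflexive transitive closure of straight-line steps. -/
def Reach (C : CRN S R) : (S → ℝ) → (S → ℝ) → Prop := Relation.ReflTransGen C.Step

/-- A state is static if only the zero flux vector is applicable at it. -/
def Static (C : CRN S R) (b : S → ℝ) : Prop :=
  ∀ u, C.Applicable u b → u = 0

/-- Non-competitive: every species strictly decreased by some reaction is a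
reactant in only that reaction. -/
def NonCompetitive (C : CRN S R) : Prop :=
  ∀ r s, C.products r s < C.reactants r s → ∀ r', 0 < C.reactants r' s → r' = r

/-- A finite line-segment path of length `n`. -/
structure FinPath (C : CRN S R) (n : ℕ) where
  states : Fin (n+1) → S → ℝ
  flux : Fin n → R → ℝ
  valid : ∀ i : Fin n, C.StepWith (flux i) (states i.castSucc) (states i.succ)

end CRN

/-- The dual-rail min CRN: species `X₁⁺, X₁⁻, X₂⁺, X₂⁻, Y⁺, Y⁻` (indices 0..5),
reactions `X₁⁻ → X₂⁺ + Y⁻`, `X₂⁻ → X₁⁺ + Y⁻`, `X₁⁺ + X₂⁺ → Y⁺`.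
From `(x₁⁺, x₁⁻, x₂⁺, x₂⁻, 0, 0)` there is a line-segment reachable static
state with `y⁺ - y⁻ = min (x₁⁺ - x₁⁻) (x₂⁺ - x₂⁻)`. -/

private lemma v60 {al : Type} (a b c d e f : al) : ![a,b,c,d,e,f] 0 = a := rfl
private lemma v61 {al : Type} (a b c d e f : al) : ![a,b,c,d,e,f] 1 = b := rfl
private lemma v62 {al : Type} (a b c d e f : al) : ![a,b,c,d,e,f] 2 = c := rfl
private lemma v63 {al : Type} (a b c d e f : al) : ![a,b,c,d,e,f] 3 = d := rfl
private lemma v64 {al : Type} (a b c d e f : al) : ![a,b,c,d,e,f] 4 = e := rfl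
private lemma v65 {al : Type} (a b c d e f : al) : ![a,b,c,d,e,f] 5 = f := rfl
private lemma v30 {al : Type} (a b c : al) : ![a,b,c] 0 = a := rfl
private lemma v31 {al : Type} (a b c : al) : ![a,b,c] 1 = b := rfl
private lemma v32 {al : Type} (a b c : al) : ![a,b,c] 2 = c := rfl

private lemma w60 {al : Type} (a b c d e f : al) (h : 0 < 6) : ![a,b,c,d,e,f] ⟨0,h⟩ = a := rfl
private lemma w61 {al : Type} (a b c d e f : al) (h : 1 < 6) : ![a,b,c,d,e,f] ⟨1,h⟩ = b := rfl
private lemma w62 {al : Type} (a b c d e f : al) (h : 2 < 6) : ![a,b,c,d,e,f] ⟨2,h⟩ = c := rfl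
private lemma w63 {al : Type} (a b c d e f : al) (h : 3 < 6) : ![a,b,c,d,e,f] ⟨3,h⟩ = d := rfl
private lemma w64 {al : Type} (a b c d e f : al) (h : 4 < 6) : ![a,b,c,d,e,f] ⟨4,h⟩ = e := rfl
private lemma w65 {al : Type} (a b c d e f : al) (h : 5 < 6) : ![a,b,c,d,e,f] ⟨5,h⟩ = f := rfl
private lemma w30 {al : Type} (a b c : al) (h : 0 < 3) : ![a,b,c] ⟨0,h⟩ = a := rfl
private lemma w31 {al : Type} (a b c : al) (h : 1 < 3) : ![a,b,c] ⟨1,h⟩ = b := rfl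
private lemma w32 {al : Type} (a b c : al) (h : 2 < 3) : ![a,b,c] ⟨2,h⟩ = c := rfl

theorem stmt3 (x1p x1m x2p x2m : ℝ)
    (h1 : 0 ≤ x1p) (h2 : 0 ≤ x1m) (h3 : 0 ≤ x2p) (h4 : 0 ≤ x2m) :
    let C : CRN (Fin 6) (Fin 3) :=
      ⟨![![0, 1, 0, 0, 0, 0], ![0, 0, 0, 1, 0, 0], ![1, 0, 1, 0, 0, 0]],
        ![![0, 0, 1, 0, 0, 1], ![1, 0, 0, 0, 0, 1], ![0, 0, 0, 0, 1, 0]]⟩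
    let a : Fin 6 → ℝ := ![x1p, x1m, x2p, x2m, 0, 0]
    ∃ b, C.Reach a b ∧ C.Static b ∧ b 4 - b 5 = min (x1p - x1m) (x2p - x2m) := by
  intro C a
  set t := min (x1p + x2m) (x2p + x1m) with ht
  have ht0 : 0 ≤ t := le_min (by linarith) (by linarith)
  have ht1 : t ≤ x1p + x2m := min_le_left _ _
  have ht2 : t ≤ x2p + x1m := min_le_right _ _
  set mid : Fin 6 → ℝ := ![x1p + x2m, 0, x2p + x1m, 0, 0, x1m + x2m] with hmid
  set b : Fin 6 → ℝ := ![x1p + x2m - t, 0, x2p + x1m - t, 0, t, x1m + x2m] with hb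
  refine ⟨b, ?_, ?_, ?_⟩
  · have s1 : C.Step a mid := by
      refine ⟨![x1m, x2m, 0], ⟨?_, ?_⟩, ?_, ?_⟩
      · intro r; fin_cases r <;>
          simp only [v30, v31, v32, w30, w31, w32] <;> [exact h2; exact h4; exact le_refl 0]
      · intro r hr s hs
        fin_cases r <;> fin_cases s <;>
          simp_all only [C, a, v30, v31, v32, w30, w31, w32, v60, v61, v62, v63, v64, v65, w60, w61, w62, w63, w64, w65] <;>
          first | exact hr | exact absurd hr (lt_irrefl 0) | exact absurd hs (lt_irrefl 0) | linarith
      · intro s; rw [hmid]; fin_cases s <;>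
          simp only [v60, v61, v62, v63, v64, v65, w60, w61, w62, w63, w64, w65] <;> linarith
      · intro s
        rw [hmid]; fin_cases s <;>
          simp only [C, a, CRN.net, Fin.sum_univ_three, v30, v31, v32, w30, w31, w32,
            v60, v61, v62, v63, v64, v65, w60, w61, w62, w63, w64, w65] <;> push_cast <;> ring
    have s2 : C.Step mid b := by
      refine ⟨![0, 0, t], ⟨?_, ?_⟩, ?_, ?_⟩
      · intro r; fin_cases r <;>
          simp only [v30, v31, v32, w30, w31, w32] <;> [exact le_refl 0; exact le_refl 0; exact ht0]
      · intro r hr s hs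
        rw [hmid]
        fin_cases r <;> fin_cases s <;>
          simp_all only [C, v30, v31, v32, w30, w31, w32, v60, v61, v62, v63, v64, v65, w60, w61, w62, w63, w64, w65] <;>
          first
            | exact absurd hr (lt_irrefl 0)
            | exact absurd hs (lt_irrefl 0)
            | linarith
      · intro s; rw [hb]; fin_cases s <;>
          simp only [v60, v61, v62, v63, v64, v65, w60, w61, w62, w63, w64, w65] <;> linarith
      · intro s
        rw [hb, hmid]; fin_cases s <;>
          simp only [C, CRN.net, Fin.sum_univ_three, v30, v31, v32, w30, w31, w32,
            v60, v61, v62, v63, v64, v65, w60, w61, w62, w63, w64, w65] <;> push_cast <;> ring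
    exact Relation.ReflTransGen.head s1 (Relation.ReflTransGen.single s2)
  · intro u hu
    obtain ⟨hnn, happ⟩ := hu
    funext r
    fin_cases r
    · by_contra h
      have hpos : 0 < u 0 := lt_of_le_of_ne (hnn 0) (by simpa using Ne.symm h)
      have := happ 0 hpos 1 (by norm_num [C, v30, v61])
      rw [hb, v61] at this; exact lt_irrefl 0 this
    · by_contra h
      have hpos : 0 < u 1 := lt_of_le_of_ne (hnn 1) (by simpa using Ne.symm h)
      have := happ 1 hpos 3 (by norm_num [C, v31, v63])
      rw [hb, v63] at this; exact lt_irrefl 0 this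
    · by_contra h
      have hpos : 0 < u 2 := lt_of_le_of_ne (hnn 2) (by simpa using Ne.symm h)
      have h0 := happ 2 hpos 0 (by show (0:ℕ) < 1; norm_num)
      have h2' := happ 2 hpos 2 (by show (0:ℕ) < 1; norm_num)
      rw [hb, v60] at h0; rw [hb, v62] at h2'
      rcases le_total (x1p + x2m) (x2p + x1m) with hle | hle
      · rw [ht, min_eq_left hle] at h0; linarith
      · rw [ht, min_eq_right hle] at h2'; linarith
  · have hb4 : b 4 = t := by rw [hb, v64]
    have hb5 : b 5 = x1m + x2m := by rw [hb, v65]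
    rw [hb4, hb5, ht]
    rcases le_total (x1p + x2m) (x2p + x1m) with hle | hle
    · rw [min_eq_left hle, min_eq_left (by linarith : x1p - x1m ≤ x2p - x2m)]; ring
    · rw [min_eq_right hle, min_eq_right (by linarith : x2p - x2m ≤ x1p - x1m)]; ring
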